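/- Let n ≥ 1 and fix a finite family of linear symmetries for an object with n indices. For every dimension k > n, the number of independent components can be computed from its first n values as f(k) = Σ_{i=1}^{n} (−1)^{n−i} · f(i) · C(k, i) · C(k−1−i, n−i), where C(·,·) denotes the binomial coefficient. -/

import Mathlib

open Finset Module



/-- The subspace of indexed objects `A : (Fin n → Fin k) → ℝ` satisfying the
homogeneous system induced by a family of `s` linear symmetries, the `l`-th
symmetry having `p l` terms with coefficients `a l j` and permutations `π l j`:
for every index assignment `ι`, `∑ j, a l j * A (ι ∘ π l j) = 0`. -/
def solSpace (n k s : ℕ) (p : Fin s → ℕ)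
    (a : (l : Fin s) → Fin (p l) → ℝ)
    (π : (l : Fin s) → Fin (p l) → Equiv.Perm (Fin n)) :
    Submodule ℝ ((Fin n → Fin k) → ℝ) where
  carrier := {A | ∀ (l : Fin s) (ι : Fin n → Fin k),
    ∑ j : Fin (p l), a l j * A (ι ∘ (π l j)) = 0}
  add_mem' := by
    intro A B hA hB l ι
    have hA' := hA l ι
    have hB' := hB l ι
    simp only [Pi.add_apply, mul_add, Finset.sum_add_distrib]
    rw [hA', hB', add_zero]
  zero_mem' := by
    intro l ι
    simp
  smul_mem' := by
    intro c A hA l ι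
    have hA' := hA l ι
    simp only [Pi.smul_apply, smul_eq_mul, mul_left_comm, ← Finset.mul_sum]
    rw [hA', mul_zero]



section Con
variable {s : ℕ} {p : Fin s → ℕ}

/-- Generalized constraint space. -/
def conSpace (a : (l : Fin s) → Fin (p l) → ℝ) {Q : Type*}
    (act : (l : Fin s) → Fin (p l) → Q → Q) :
    Submodule ℝ (Q → ℝ) where
  carrier := {A | ∀ (l : Fin s) (q : Q), ∑ j : Fin (p l), a l j * A (act l j q) = 0}
  add_mem' := by
    intro A B hA hB l q
    simp only [Pi.add_apply, mul_add, Finset.sum_add_distrib, hA l q, hB l q, add_zero]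
  zero_mem' := by intro l q; simp
  smul_mem' := by
    intro c A hA l q
    simp only [Pi.smul_apply, smul_eq_mul, mul_left_comm, ← Finset.mul_sum, hA l q, mul_zero]

lemma mem_conSpace {a : (l : Fin s) → Fin (p l) → ℝ} {Q : Type*}
    {act : (l : Fin s) → Fin (p l) → Q → Q} {A : Q → ℝ} :
    A ∈ conSpace a act ↔ ∀ l q, ∑ j : Fin (p l), a l j * A (act l j q) = 0 := Iff.rfl

/-- Transport along an equivariant bijection. -/
lemma finrank_conSpace_congr (a : (l : Fin s) → Fin (p l) → ℝ) {Q Q' : Type*}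
    [Fintype Q] [Fintype Q']
    {act : (l : Fin s) → Fin (p l) → Q → Q} {act' : (l : Fin s) → Fin (p l) → Q' → Q'}
    (E : Q ≃ Q') (hE : ∀ l j q, E (act l j q) = act' l j (E q)) :
    finrank ℝ (conSpace a act) = finrank ℝ (conSpace a act') := by
  have hE' : ∀ l j q', act l j (E.symm q') = E.symm (act' l j q') := by
    intro l j q'
    have := hE l j (E.symm q')
    rw [E.apply_symm_apply] at this
    rw [← this, E.symm_apply_apply]
  have hsub : conSpace a act
      = Submodule.comap (LinearEquiv.funCongrLeft ℝ ℝ E.symm).toLinearMap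
          (conSpace a act') := by
    ext A
    simp only [Submodule.mem_comap, mem_conSpace, LinearEquiv.funCongrLeft,
      LinearEquiv.coe_coe, LinearEquiv.piCongrLeft'_apply]
    constructor
    · intro h l q'
      have := h l (E.symm q')
      calc ∑ j : Fin (p l), a l j * A (E.symm (act' l j q'))
          = ∑ j : Fin (p l), a l j * A (act l j (E.symm q')) := by
            refine Finset.sum_congr rfl (fun j _ => ?_)
            rw [hE']
        _ = 0 := this
    · intro h l q
      have := h l (E q)
      calc ∑ j : Fin (p l), a l j * A (act l j q)
          = ∑ j : Fin (p l), a l j * A (act l j (E.symm (E q))) := by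
            rw [E.symm_apply_apply]
        _ = ∑ j : Fin (p l), a l j * A (E.symm (act' l j (E q))) := by
            refine Finset.sum_congr rfl (fun j _ => ?_)
            rw [hE']
        _ = 0 := this
  rw [hsub, Submodule.comap_equiv_eq_map_symm, LinearEquiv.finrank_map_eq]

variable {Q T : Type*}

/-- restricted action on a fiber -/
def fiberAct (act : (l : Fin s) → Fin (p l) → Q → Q) (r : Q → T)
    (hr : ∀ l j q, r (act l j q) = r q) (t : T) (l : Fin s) (j : Fin (p l))
    (q : {q : Q // r q = t}) : {q : Q // r q = t} :=
  ⟨act l j q.1, by rw [hr]; exact q.2⟩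

noncomputable def fiberFunEquiv (r : Q → T) :
    (Q → ℝ) ≃ₗ[ℝ] ∀ t : T, ({q : Q // r q = t} → ℝ) where
  toFun A := fun t q => A q.1
  map_add' _ _ := rfl
  map_smul' _ _ := rfl
  invFun x := fun q => x (r q) ⟨q, rfl⟩
  left_inv A := rfl
  right_inv x := by
    funext t q
    obtain ⟨q, hq⟩ := q
    subst hq
    rfl

noncomputable def subPiEquiv {ι : Type*} {M : ι → Type*}
    [∀ i, AddCommGroup (M i)] [∀ i, Module ℝ (M i)] (V : ∀ i, Submodule ℝ (M i)) :
    (Submodule.pi Set.univ V) ≃ₗ[ℝ] ∀ i, V i where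
  toFun x := fun i => ⟨x.1 i, x.2 i (Set.mem_univ i)⟩
  map_add' _ _ := rfl
  map_smul' _ _ := rfl
  invFun y := ⟨fun i => (y i).1, fun i _ => (y i).2⟩
  left_inv _ := rfl
  right_inv _ := rfl

lemma finrank_conSpace_fiber [Fintype Q] [Fintype T] [DecidableEq T]
    (a : (l : Fin s) → Fin (p l) → ℝ)
    (act : (l : Fin s) → Fin (p l) → Q → Q) (r : Q → T)
    (hr : ∀ l j q, r (act l j q) = r q) :
    finrank ℝ (conSpace a act)
      = ∑ t : T, finrank ℝ (conSpace a (fiberAct act r hr t)) := by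
  have hsub : conSpace a act
      = Submodule.comap (fiberFunEquiv (Q := Q) r).toLinearMap
          (Submodule.pi Set.univ (fun t => conSpace a (fiberAct act r hr t))) := by
    ext A
    simp only [Submodule.mem_comap, Submodule.mem_pi, mem_conSpace, Set.mem_univ,
      forall_true_left]
    constructor
    · intro h t l q
      exact h l q.1
    · intro h l q
      exact h (r q) l ⟨q, rfl⟩
  rw [hsub, Submodule.comap_equiv_eq_map_symm, LinearEquiv.finrank_map_eq,
    (subPiEquiv (fun t => conSpace a (fiberAct act r hr t))).finrank_eq, finrank_pi_fintype]

end Con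

section Main
variable {n s : ℕ} {p : Fin s → ℕ}
  (π : (l : Fin s) → Fin (p l) → Equiv.Perm (Fin n))

def surjAct (m : ℕ) (l : Fin s) (j : Fin (p l))
    (ι : {ι : Fin n → Fin m // Function.Surjective ι}) :
    {ι : Fin n → Fin m // Function.Surjective ι} :=
  ⟨ι.1 ∘ (π l j), ι.2.comp (π l j).surjective⟩

lemma surjBlock_isEmpty {m : ℕ} (hn : 1 ≤ n) (hm : m = 0 ∨ n < m) :
    IsEmpty {ι : Fin n → Fin m // Function.Surjective ι} := by
  constructor
  rintro ⟨ι, hι⟩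
  rcases hm with rfl | hm
  · exact (ι ⟨0, hn⟩).elim0
  · have := Fintype.card_le_of_surjective ι hι
    simp [Fintype.card_fin] at this
    omega

lemma finrank_le_of_isEmpty {Q : Type} [Fintype Q] [IsEmpty Q] (V : Submodule ℝ (Q → ℝ)) :
    finrank ℝ V = 0 := by
  haveI : Subsingleton (Q → ℝ) := ⟨fun f g => funext fun q => isEmptyElim q⟩
  haveI : Subsingleton V := ⟨fun x y => Subtype.ext (Subsingleton.elim _ _)⟩
  exact Module.finrank_zero_of_subsingleton

lemma image_act {k : ℕ} (l : Fin s) (j : Fin (p l)) (ι : Fin n → Fin k) :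
    Finset.image (ι ∘ (π l j)) Finset.univ = Finset.image ι Finset.univ := by
  rw [← Finset.image_image, Finset.image_univ_equiv]

noncomputable def blockEquiv {k : ℕ} (S : Finset (Fin k)) :
    {ι : Fin n → Fin k // Finset.image ι Finset.univ = S} ≃
      {ι' : Fin n → Fin S.card // Function.Surjective ι'} where
  toFun ι := ⟨fun x => S.equivFin ⟨ι.1 x, by
      have h := Finset.mem_image_of_mem ι.1 (Finset.mem_univ x)
      rwa [ι.2] at h⟩, by
    intro y
    have hv : (S.equivFin.symm y).1 ∈ Finset.image ι.1 Finset.univ := by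
      rw [ι.2]
      exact (S.equivFin.symm y).2
    obtain ⟨x, _, hx⟩ := Finset.mem_image.1 hv
    refine ⟨x, ?_⟩
    rw [Equiv.apply_eq_iff_eq_symm_apply]
    exact Subtype.ext hx⟩
  invFun ι' := ⟨fun x => (S.equivFin.symm (ι'.1 x)).1, by
    ext v
    simp only [Finset.mem_image, Finset.mem_univ, true_and]
    constructor
    · rintro ⟨x, rfl⟩
      exact (S.equivFin.symm (ι'.1 x)).2
    · intro hv
      obtain ⟨x, hx⟩ := ι'.2 (S.equivFin ⟨v, hv⟩)
      exact ⟨x, by rw [hx, Equiv.symm_apply_apply]⟩⟩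
  left_inv ι := by
    apply Subtype.ext
    funext x
    simp [Equiv.symm_apply_apply]
  right_inv ι' := by
    apply Subtype.ext
    funext x
    simp only []
    rw [Subtype.coe_eta, Equiv.apply_symm_apply]

lemma blockEquiv_equivariant {k : ℕ} (S : Finset (Fin k)) (l : Fin s) (j : Fin (p l))
    (q : {ι : Fin n → Fin k // Finset.image ι Finset.univ = S}) :
    blockEquiv S (⟨q.1 ∘ (π l j), (image_act π l j q.1).trans q.2⟩ :
        {ι : Fin n → Fin k // Finset.image ι Finset.univ = S})
      = surjAct π S.card l j (blockEquiv S q) := by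
  apply Subtype.ext
  funext x
  rfl

end Main


lemma negpow_sub {N j : ℕ} (h : j ≤ N) : (-1:ℤ)^(N-j) = (-1)^N * (-1)^j := by
  have hN : N - j + 2 * j = N + j := by omega
  have : ((-1:ℤ))^(N-j) * ((-1)^2)^j = (-1)^N * (-1)^j := by
    rw [← pow_mul, ← pow_add, hN, pow_add]
  simpa using this

lemma key_comb : ∀ (N K : ℕ), N < K →
    ∑ j ∈ Finset.range (N+1), (-1:ℤ)^(N-j) * (K.choose j) * ((K-1-j).choose (N-j)) = 1 := by
  intro N
  induction N with
  | zero => intro K hK; simp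
  | succ N ih =>
    intro K hK
    obtain ⟨K', rfl⟩ : ∃ K', K = K' + 1 := ⟨K - 1, by omega⟩
    have hNK' : N < K' := by omega
    rw [Finset.sum_range_succ']
    have step : ∀ j ∈ Finset.range (N+1),
        (-1:ℤ)^(N+1-(j+1)) * ((K'+1).choose (j+1)) * ((K'+1-1-(j+1)).choose (N+1-(j+1)))
          = (-1:ℤ)^(N-j) * (K'.choose j) * ((K'-1-j).choose (N-j))
            + (-1:ℤ)^(N-j) * (K'.choose (j+1)) * ((K'-1-j).choose (N-j)) := by
      intro j hj
      have h1 : N+1-(j+1) = N - j := by omega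
      have h2 : K'+1-1-(j+1) = K' - 1 - j := by omega
      rw [h1, h2, Nat.choose_succ_succ']
      push_cast
      ring
    rw [Finset.sum_congr rfl step, Finset.sum_add_distrib, ih _ hNK']
    -- remaining: second sum + j = 0 term = 0
    have tri : ∀ j ∈ Finset.range (N+1),
        (-1:ℤ)^(N-j) * (K'.choose (j+1)) * ((K'-1-j).choose (N-j))
          = (-1:ℤ)^(N-j) * ((N+1).choose (j+1)) * (K'.choose (N+1)) := by
      intro j hj
      simp only [Finset.mem_range] at hj
      have hj' : j + 1 ≤ N + 1 := by omega
      have h0e : N+1-(j+1) = N - j := by omega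
      have h1 : K' - 1 - j = K' - (j+1) := by omega
      have h2 : N - j = (N+1) - (j+1) := by omega
      have := Nat.choose_mul (n := K') (k := N+1) (s := j+1) hj'
      -- choose K' (N+1) * choose (N+1) (j+1) = choose K' (j+1) * choose (K'-(j+1)) (N+1-(j+1))
      rw [h1]
      have hcast : (K'.choose (j+1) : ℤ) * ((K'-(j+1)).choose (N-j) : ℤ)
          = (K'.choose (N+1) : ℤ) * ((N+1).choose (j+1)) := by
        rw [h2]
        exact_mod_cast congrArg (Nat.cast (R := ℤ)) this.symm
      calc (-1:ℤ)^(N-j) * (K'.choose (j+1)) * ((K'-(j+1)).choose (N-j))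
          = (-1:ℤ)^(N-j) * ((K'.choose (j+1)) * ((K'-(j+1)).choose (N-j))) := by ring
        _ = (-1:ℤ)^(N-j) * ((K'.choose (N+1)) * ((N+1).choose (j+1))) := by rw [hcast]
        _ = (-1:ℤ)^(N-j) * ((N+1).choose (j+1)) * (K'.choose (N+1)) := by ring
    rw [Finset.sum_congr rfl tri]
    have expand : ∀ j ∈ Finset.range (N+1),
        (-1:ℤ)^(N-j) * ((N+1).choose (j+1)) * (K'.choose (N+1))
          = ((-1:ℤ)^(j+1) * ((N+1).choose (j+1))) * (-((-1)^N * (K'.choose (N+1)))) := by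
      intro j hj
      simp only [Finset.mem_range] at hj
      rw [negpow_sub (by omega)]
      ring
    rw [Finset.sum_congr rfl expand, ← Finset.sum_mul]
    have alt := Int.alternating_sum_range_choose_of_ne (n := N+1) (by omega)
    have alt' : ∑ j ∈ Finset.range (N+1), (-1:ℤ)^(j+1) * ((N+1).choose (j+1)) = -1 := by
      have := Finset.sum_range_succ' (fun i => (-1:ℤ)^i * ((N+1).choose i)) (N+1)
      rw [this] at alt
      simp at alt
      linarith [alt]
    rw [alt']
    have h0 : (-1:ℤ)^(N+1-0) * ((K'+1).choose 0) * ((K'+1-1-0).choose (N+1-0))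
        = (-1)^(N+1) * (K'.choose (N+1)) := by simp
    rw [h0]
    rw [pow_succ]
    ring



lemma single_interp {n k m : ℕ} (hm : 1 ≤ m) (hmn : m ≤ n) (hk : n < k) :
    ∑ i ∈ Icc 1 n, (-1:ℤ)^(n-i) * (i.choose m) * (k.choose i) * ((k-1-i).choose (n-i))
      = k.choose m := by
  rw [← Finset.sum_subset (Finset.Icc_subset_Icc_left hm)
      (by
        intro i hi hi'
        simp only [Finset.mem_Icc] at hi hi'
        have : i < m := by omega
        rw [Nat.choose_eq_zero_of_lt this]
        push_cast
        ring)]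
  have hIcc : Finset.Icc m n = Finset.Ico m (n+1) := by rw [Finset.Ico_add_one_right_eq_Icc]
  rw [hIcc, Finset.sum_Ico_eq_sum_range]
  have hrange : n + 1 - m = (n - m) + 1 := by omega
  rw [hrange]
  have step : ∀ j ∈ Finset.range ((n-m)+1),
      (-1:ℤ)^(n-(m+j)) * ((m+j).choose m) * (k.choose (m+j)) * ((k-1-(m+j)).choose (n-(m+j)))
        = (k.choose m) * ((-1:ℤ)^((n-m)-j) * ((k-m).choose j) * (((k-m)-1-j).choose ((n-m)-j))) := by
    intro j hj
    simp only [Finset.mem_range] at hj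
    have h1 : n - (m+j) = (n-m) - j := by omega
    have h2 : k - 1 - (m+j) = (k-m) - 1 - j := by omega
    have h3 : m + j - m = j := by omega
    have hmul := Nat.choose_mul (n := k) (k := m+j) (s := m) (by omega)
    rw [h3] at hmul
    have hmulZ : ((k.choose (m+j)) : ℤ) * ((m+j).choose m) = (k.choose m) * ((k-m).choose j) := by
      exact_mod_cast congrArg (Nat.cast (R := ℤ)) hmul
    rw [h1, h2]
    calc (-1:ℤ)^((n-m)-j) * ((m+j).choose m) * (k.choose (m+j)) * (((k-m)-1-j).choose ((n-m)-j))
        = ((k.choose (m+j) : ℤ) * ((m+j).choose m)) * ((-1:ℤ)^((n-m)-j) * (((k-m)-1-j).choose ((n-m)-j))) := by ring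
      _ = ((k.choose m : ℤ) * ((k-m).choose j)) * ((-1:ℤ)^((n-m)-j) * (((k-m)-1-j).choose ((n-m)-j))) := by rw [hmulZ]
      _ = (k.choose m) * ((-1:ℤ)^((n-m)-j) * ((k-m).choose j) * (((k-m)-1-j).choose ((n-m)-j))) := by ring
  rw [Finset.sum_congr rfl step, ← Finset.mul_sum, key_comb (n-m) (k-m) (by omega), mul_one]

lemma interp {n k : ℕ} (hn : 1 ≤ n) (hk : n < k) (G : ℕ → ℤ) :
    ∑ i ∈ Icc 1 n, (-1:ℤ)^(n-i) * (∑ m ∈ Icc 1 n, (i.choose m : ℤ) * G m) * (k.choose i) * ((k-1-i).choose (n-i))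
      = ∑ m ∈ Icc 1 n, (k.choose m : ℤ) * G m := by
  have : ∀ i ∈ Icc 1 n,
      (-1:ℤ)^(n-i) * (∑ m ∈ Icc 1 n, (i.choose m : ℤ) * G m) * (k.choose i) * ((k-1-i).choose (n-i))
        = ∑ m ∈ Icc 1 n, ((-1:ℤ)^(n-i) * (i.choose m) * (k.choose i) * ((k-1-i).choose (n-i))) * G m := by
    intro i _
    rw [Finset.mul_sum, Finset.sum_mul, Finset.sum_mul]
    exact Finset.sum_congr rfl (fun m _ => by ring)
  rw [Finset.sum_congr rfl this, Finset.sum_comm]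
  refine Finset.sum_congr rfl (fun m hm => ?_)
  simp only [Finset.mem_Icc] at hm
  rw [← Finset.sum_mul, single_interp hm.1 hm.2 hk]


section Count
variable {n s : ℕ} {p : Fin s → ℕ}

noncomputable def gdim (a : (l : Fin s) → Fin (p l) → ℝ)
    (π : (l : Fin s) → Fin (p l) → Equiv.Perm (Fin n)) (m : ℕ) : ℕ :=
  finrank ℝ (conSpace a (surjAct π m))

lemma gdim_eq_zero (a : (l : Fin s) → Fin (p l) → ℝ)
    (π : (l : Fin s) → Fin (p l) → Equiv.Perm (Fin n)) {m : ℕ}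
    (hn : 1 ≤ n) (hm : m = 0 ∨ n < m) : gdim a π m = 0 := by
  haveI := surjBlock_isEmpty (n := n) hn hm
  unfold gdim
  exact finrank_le_of_isEmpty _

lemma finrank_solSpace_eq (n k s : ℕ) (p : Fin s → ℕ)
    (a : (l : Fin s) → Fin (p l) → ℝ)
    (π : (l : Fin s) → Fin (p l) → Equiv.Perm (Fin n)) :
    finrank ℝ (solSpace n k s p a π)
      = ∑ m ∈ Finset.range (k+1), (k.choose m) * gdim a π m := by
  have h1 : solSpace n k s p a π
      = conSpace a (fun l j (ι : Fin n → Fin k) => ι ∘ (π l j)) := rfl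
  rw [h1, finrank_conSpace_fiber a _ (fun ι => Finset.image ι Finset.univ)
    (image_act π)]
  have h2 : ∀ t : Finset (Fin k),
      finrank ℝ (conSpace a (fiberAct (fun l j (ι : Fin n → Fin k) => ι ∘ (π l j))
        (fun ι => Finset.image ι Finset.univ) (image_act π) t)) = gdim a π t.card := by
    intro t
    exact finrank_conSpace_congr a (blockEquiv t)
      (fun l j q => blockEquiv_equivariant π t l j q)
  rw [Finset.sum_congr rfl (fun t _ => h2 t)]
  rw [← Finset.powerset_univ, Finset.sum_powerset_apply_card (fun m => gdim a π m)]
  simp [Finset.card_univ, mul_comm]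

lemma finrank_solSpace_Icc (hn : 1 ≤ n) {i : ℕ} (hi : i ≤ n) (a : (l : Fin s) → Fin (p l) → ℝ)
    (π : (l : Fin s) → Fin (p l) → Equiv.Perm (Fin n)) :
    finrank ℝ (solSpace n i s p a π)
      = ∑ m ∈ Finset.Icc 1 n, (i.choose m) * gdim a π m := by
  rw [finrank_solSpace_eq n i s p a π]
  have e1 : ∑ m ∈ Finset.range (i+1), (i.choose m) * gdim a π m
      = ∑ m ∈ Finset.range (n+1), (i.choose m) * gdim a π m := by
    apply Finset.sum_subset
    · intro m hm
      simp only [Finset.mem_range] at hm ⊢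
      omega
    · intro m hm hm'
      simp only [Finset.mem_range] at hm hm'
      rw [Nat.choose_eq_zero_of_lt (by omega), zero_mul]
  have e2 : ∑ m ∈ Finset.Icc 1 n, (i.choose m) * gdim a π m
      = ∑ m ∈ Finset.range (n+1), (i.choose m) * gdim a π m := by
    apply Finset.sum_subset
    · intro m hm
      simp only [Finset.mem_Icc] at hm
      simp only [Finset.mem_range]
      omega
    · intro m hm hm'
      simp only [Finset.mem_range] at hm
      simp only [Finset.mem_Icc] at hm'
      have : m = 0 := by omega
      subst this
      rw [gdim_eq_zero a π hn (Or.inl rfl), mul_zero]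
  rw [e1, ← e2]

end Count


/-- for every dimension `k > n`, the number of independent
components can be computed from its first `n` values as
`f(k) = ∑_{i=1}^{n} (-1)^(n-i) * f(i) * C(k,i) * C(k-1-i, n-i)`. -/
theorem numIndepComponents_from_first_n_values
    (n s : ℕ) (hn : 1 ≤ n) (p : Fin s → ℕ)
    (a : (l : Fin s) → Fin (p l) → ℝ)
    (π : (l : Fin s) → Fin (p l) → Equiv.Perm (Fin n))
    (k : ℕ) (hk : n < k) :
    (Module.finrank ℝ (solSpace n k s p a π) : ℤ) =
      ∑ i ∈ Finset.Icc 1 n,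
        (-1 : ℤ) ^ (n - i) * (Module.finrank ℝ (solSpace n i s p a π)) *
          (Nat.choose k i) * (Nat.choose (k - 1 - i) (n - i)) := by
  have hfk : finrank ℝ (solSpace n k s p a π)
      = ∑ m ∈ Finset.Icc 1 n, (k.choose m) * gdim a π m := by
    rw [finrank_solSpace_eq n k s p a π]
    symm
    apply Finset.sum_subset
    · intro m hm
      simp only [Finset.mem_Icc] at hm
      simp only [Finset.mem_range]
      omega
    · intro m hm hm'
      simp only [Finset.mem_range] at hm
      simp only [Finset.mem_Icc] at hm'
      rw [gdim_eq_zero a π hn (by omega), mul_zero]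
  have hfi : ∀ i ∈ Finset.Icc 1 n, finrank ℝ (solSpace n i s p a π)
      = ∑ m ∈ Finset.Icc 1 n, (i.choose m) * gdim a π m := by
    intro i hi
    simp only [Finset.mem_Icc] at hi
    exact finrank_solSpace_Icc hn hi.2 a π
  calc ((finrank ℝ (solSpace n k s p a π) : ℤ))
      = ∑ m ∈ Finset.Icc 1 n, (k.choose m : ℤ) * (gdim a π m : ℤ) := by
        rw [hfk]; push_cast; rfl
    _ = ∑ i ∈ Finset.Icc 1 n, (-1:ℤ)^(n-i)
          * (∑ m ∈ Finset.Icc 1 n, (i.choose m : ℤ) * (gdim a π m))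
          * (k.choose i) * ((k-1-i).choose (n-i)) :=
        (interp hn hk _).symm
    _ = ∑ i ∈ Finset.Icc 1 n, (-1:ℤ)^(n-i) * (finrank ℝ (solSpace n i s p a π) : ℤ)
          * (k.choose i) * ((k-1-i).choose (n-i)) := by
        refine Finset.sum_congr rfl (fun i hi => ?_)
        rw [hfi i hi]
        push_cast
        ring
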